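/- Let V be the Klein four-group with presentation ⟨i, j, k | i² = j² = k² = ijk = e⟩, with length l taken with respect to the generating set {i, j, k}, and let I = {i}. Then there is no pair (a, b) with a ∈ V^I, b ∈ V_I, j = ab and l(j) = l(a) + l(b): indeed V_I = {e, i} with j ∉ V_I, and l(ji) = l(j) = 1 so j ∉ V^I. Hence the factorisation result for presentations with involutive generators and even-length relations fails for groups with arbitrary presentations. -/

import Mathlib

/-- The relators of the Klein four-group presentation `⟨i, j, k | i² = j² = k² = ijk = e⟩`,
with `i, j, k` indexed by `0, 1, 2 : Fin 3`. -/
def kleinRels : Set (FreeGroup (Fin 3)) :=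
  { FreeGroup.of 0 ^ 2, FreeGroup.of 1 ^ 2, FreeGroup.of 2 ^ 2,
    FreeGroup.of 0 * FreeGroup.of 1 * FreeGroup.of 2 }

/-- The Klein four-group, presented as `⟨i, j, k | i² = j² = k² = ijk = e⟩`. -/
abbrev KleinV : Type := PresentedGroup kleinRels

/-- The images of the generators `i, j, k` in the Klein four-group. -/
def g (x : Fin 3) : KleinV := PresentedGroup.of x

/-- The length of an element of the Klein four-group: the least `r` such that `w` is a
product of `r` factors, each a generator or the inverse of a generator.  A letter is
encoded as a pair `(x, s)` with `s : Bool` recording the sign. -/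
noncomputable def klen (w : KleinV) : ℕ :=
  sInf {r : ℕ | ∃ L : List (Fin 3 × Bool), L.length = r ∧
    (L.map fun p => cond p.2 (g p.1) (g p.1)⁻¹).prod = w}

def f3 : Fin 3 → Multiplicative (ZMod 2 × ZMod 2) :=
  ![Multiplicative.ofAdd (1, 0), Multiplicative.ofAdd (0, 1), Multiplicative.ofAdd (1, 1)]

lemma f3_rels : ∀ r ∈ kleinRels, FreeGroup.lift f3 r = 1 := by
  intro r hr
  rcases hr with h | h | h | h <;> subst h <;>
    simp [f3, map_pow, map_mul] <;> decide

noncomputable def φ : KleinV →* Multiplicative (ZMod 2 × ZMod 2) :=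
  PresentedGroup.toGroup f3_rels

lemma φ_g (x : Fin 3) : φ (g x) = f3 x := PresentedGroup.toGroup.of f3_rels

-- relator facts in KleinV
lemma rel_of_mem {r : FreeGroup (Fin 3)} (h : r ∈ kleinRels) :
    PresentedGroup.mk kleinRels r = 1 := by
  have : (PresentedGroup.mk kleinRels r : KleinV) = QuotientGroup.mk r := rfl
  rw [this]
  show (QuotientGroup.mk r : FreeGroup (Fin 3) ⧸ Subgroup.normalClosure kleinRels) = 1
  rw [QuotientGroup.eq_one_iff]
  exact Subgroup.subset_normalClosure h

lemma g0_sq : g 0 * g 0 = 1 := by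
  have := rel_of_mem (r := FreeGroup.of 0 ^ 2) (by left; rfl)
  simpa [g, PresentedGroup.of, sq, map_mul] using this

lemma g012 : g 0 * g 1 * g 2 = 1 := by
  have := rel_of_mem (r := FreeGroup.of 0 * FreeGroup.of 1 * FreeGroup.of 2)
    (by right; right; right; rfl)
  simpa [g, PresentedGroup.of, map_mul] using this

example : True := trivial

lemma g1_sq : g 1 * g 1 = 1 := by
  have := rel_of_mem (r := FreeGroup.of 1 ^ 2) (by right; left; rfl)
  simpa [g, PresentedGroup.of, sq, map_mul] using this

lemma g0_inv : (g 0)⁻¹ = g 0 := inv_eq_of_mul_eq_one_right g0_sq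
lemma g1_inv : (g 1)⁻¹ = g 1 := inv_eq_of_mul_eq_one_right g1_sq

lemma g2_eq : g 2 = g 1 * g 0 := by
  have h : (g 0 * g 1)⁻¹ = g 2 := inv_eq_of_mul_eq_one_right g012
  rw [← h, mul_inv_rev, g0_inv, g1_inv]

lemma g_ne_one (x : Fin 3) : g x ≠ 1 := by
  intro h
  have := congrArg φ h
  rw [φ_g, map_one] at this
  fin_cases x <;> revert this <;> decide

lemma g1_ne_g0 : g 1 ≠ g 0 := by
  intro h
  have := congrArg φ h
  rw [φ_g, φ_g] at this
  revert this; decide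

lemma klen_g (x : Fin 3) : klen (g x) = 1 := by
  have hmem : 1 ∈ {r : ℕ | ∃ L : List (Fin 3 × Bool), L.length = r ∧
      (L.map fun p => cond p.2 (g p.1) (g p.1)⁻¹).prod = g x} :=
    ⟨[(x, true)], rfl, by simp⟩
  have hle : klen (g x) ≤ 1 := Nat.sInf_le hmem
  have hne : klen (g x) ≠ 0 := by
    intro h0
    rcases (Nat.sInf_eq_zero.mp h0) with h | h
    · obtain ⟨L, hL, hprod⟩ := h
      rw [List.length_eq_zero_iff.mp hL] at hprod
      exact g_ne_one x (by simpa using hprod.symm)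
    · exact absurd hmem (h ▸ Set.notMem_empty 1)
  omega

lemma closure_eq : (Subgroup.closure ({g 0} : Set KleinV) : Set KleinV) = {1, g 0} := by
  ext y
  constructor
  · intro hy
    refine Subgroup.closure_induction ?_ ?_ ?_ ?_ hy
    · rintro z rfl; right; rfl
    · left; rfl
    · rintro z w _ _ (rfl | rfl) (rfl | rfl)
      · left; rw [one_mul]
      · right; rw [one_mul]; rfl
      · right; rw [mul_one]; rfl
      · left; exact g0_sq
    · rintro z _ (rfl | rfl)
      · left; rw [inv_one]
      · right; exact g0_inv
  · rintro (rfl | rfl)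
    · exact Subgroup.one_mem _
    · exact Subgroup.subset_closure rfl

/-- For the Klein four-group `V` and `I = {i}`: `V_I = {e, i}`, `j ∉ V_I`,
`l(ji) = l(j) = 1` so `j ∉ V^I`, and `j` admits no length-additive factorisation
`j = ab` with `a ∈ V^I`, `b ∈ V_I`.  Hence the factorisation result fails for
groups with arbitrary presentations. -/
theorem stmt_17 :
    (Subgroup.closure ({g 0} : Set KleinV) : Set KleinV) = {1, g 0} ∧
    g 1 ∉ Subgroup.closure ({g 0} : Set KleinV) ∧
    klen (g 1 * g 0) = 1 ∧ klen (g 1) = 1 ∧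
    ¬ (∀ x ∈ ({0} : Set (Fin 3)), klen (g 1) < klen (g 1 * g x)) ∧
    ¬ ∃ a b : KleinV,
        (∀ x ∈ ({0} : Set (Fin 3)), klen a < klen (a * g x)) ∧
        b ∈ Subgroup.closure ({g 0} : Set KleinV) ∧
        g 1 = a * b ∧ klen (g 1) = klen a + klen b := by
  have h10 : g 1 * g 0 = g 2 := g2_eq.symm
  refine ⟨closure_eq, ?_, ?_, klen_g 1, ?_, ?_⟩
  · intro h
    have : g 1 ∈ ({1, g 0} : Set KleinV) := closure_eq ▸ h
    rcases this with h | h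
    · exact g_ne_one 1 h
    · exact g1_ne_g0 h
  · rw [h10]; exact klen_g 2
  · intro h
    have := h 0 rfl
    rw [h10, klen_g 1, klen_g 2] at this
    omega
  · rintro ⟨a, b, ha, hb, hab, hlen⟩
    have hb' : b ∈ ({1, g 0} : Set KleinV) := closure_eq ▸ hb
    rcases hb' with rfl | rfl
    · rw [mul_one] at hab
      have := ha 0 rfl
      rw [← hab, klen_g 1, h10, klen_g 2] at this
      omega
    · have ha2 : a = g 2 := by
        rw [g2_eq]
        have := congrArg (· * (g 0)⁻¹) hab
        simpa [mul_assoc, g0_inv, g0_sq] using this.symm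
      rw [ha2, klen_g 1, klen_g 2, klen_g 0] at hlen
      omega
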